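/- Let F be a field of characteristic not 3 containing a primitive cube root of unity ω, and define on sl(3,F) the product x*y = ωxy − ω²yx − ((ω−ω²)/3)·tr(xy)·1. Then (x*y)*x = x*(y*x) = sr(x)·y for all x, y in sl(3,F). -/

import Mathlib

/-- The Okubo product `x * y = ω x y − ω² y x − ((ω − ω²)/3) tr(xy) 1` on `3×3`
matrices over a field `F` with a primitive cube root of unity `ω`. -/
noncomputable def okuboMul (F : Type*) [Field F] (ω : F)
    (x y : Matrix (Fin 3) (Fin 3) F) : Matrix (Fin 3) (Fin 3) F :=
  ω • (x * y) - ω ^ 2 • (y * x)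
    - (((ω - ω ^ 2) / 3) * (x * y).trace) • (1 : Matrix (Fin 3) (Fin 3) F)

section OkuboAux

open Polynomial Matrix

set_option maxHeartbeats 1000000

/-- The coefficient of `X` in the characteristic polynomial of a `3×3` matrix. -/
private lemma okubo_coeff1 (F : Type*) [Field F] (x : Matrix (Fin 3) (Fin 3) F) :
    x.charpoly.coeff 1 =
      x 0 0 * x 1 1 - x 0 1 * x 1 0 + x 0 0 * x 2 2 - x 0 2 * x 2 0
        + x 1 1 * x 2 2 - x 1 2 * x 2 1 := by
  rw [Matrix.charpoly, Matrix.det_fin_three]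
  simp only [charmatrix_apply_eq, charmatrix_apply_ne, Fin.ext_iff]
  norm_num
  ring_nf
  simp [coeff_add, coeff_sub, coeff_neg, coeff_X_pow, coeff_C_mul, coeff_X, coeff_C]
  ring

/-- Linearized Cayley–Hamilton identity for traceless `3×3` matrices. -/
private lemma okubo_key (F : Type*) [Field F] (x y : Matrix (Fin 3) (Fin 3) F)
    (hx : x.trace = 0) (hy : y.trace = 0) :
    -(x*x*y + x*y*x + y*(x*x)) + (x*y).trace • x
      + (x*x*y).trace • (1 : Matrix (Fin 3) (Fin 3) F)
      = (x 0 0 * x 1 1 - x 0 1 * x 1 0 + x 0 0 * x 2 2 - x 0 2 * x 2 0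
        + x 1 1 * x 2 2 - x 1 2 * x 2 1) • y := by
  simp only [Matrix.trace, Fin.sum_univ_three] at hx hy
  have hx' : x 2 2 = -(x 0 0) - x 1 1 := by
    simp only [Matrix.diag] at hx; linear_combination hx
  have hy' : y 2 2 = -(y 0 0) - y 1 1 := by
    simp only [Matrix.diag] at hy; linear_combination hy
  ext i j
  fin_cases i <;> fin_cases j <;>
    simp [Matrix.mul_apply, Matrix.trace, Matrix.diag, Fin.sum_univ_three,
      Matrix.one_apply, hx', hy'] <;> ring

private lemma okubo_left (F : Type*) [Field F] (h3 : (3:F) ≠ 0)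
    (ω : F) (hω3 : ω ^ 3 = 1) (hω2 : ω ^ 2 + ω + 1 = 0)
    (x y : Matrix (Fin 3) (Fin 3) F) (hx : x.trace = 0) :
    okuboMul F ω (okuboMul F ω x y) x
      = -(x*x*y + x*y*x + y*(x*x)) + (x*y).trace • x
        + (x*x*y).trace • (1 : Matrix (Fin 3) (Fin 3) F) := by
  have t1 : (x*y*x).trace = (x*x*y).trace := by
    rw [trace_mul_comm, ← mul_assoc]
  have t2 : (y*x*x).trace = (x*x*y).trace := by
    rw [mul_assoc, trace_mul_comm]
  simp only [okuboMul, sub_mul, mul_sub, smul_mul_assoc, mul_smul_comm,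
    Matrix.one_mul, Matrix.mul_one, trace_sub, trace_smul, Matrix.trace_one,
    smul_smul, Matrix.mul_assoc, t1, t2, smul_eq_mul]
  rw [show (x*(y*x)).trace = (x*x*y).trace from by rw [← Matrix.mul_assoc]; exact t1,
      show (x*(x*y)).trace = (x*x*y).trace from by rw [Matrix.mul_assoc],
      show (y*(x*x)).trace = (x*x*y).trace from by rw [← Matrix.mul_assoc]; exact t2,
      hx]
  match_scalars <;> field_simp <;>
    first
      | linear_combination (ω ^ 2 - ω + 1) * hω2
      | linear_combination hω3
      | linear_combination (-3 * (x * y).trace * (ω ^ 2 - 3 * ω + 3)) * hω2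
      | linear_combination (-(x * x * y).trace * (ω ^ 2 - 3 * ω + 3)) * hω2
      | linear_combination (-1 : F) * hω3
      | linear_combination (-(x * y).trace * (ω ^ 2 - 3 * ω + 3)) * hω2
      | linear_combination (-3 * (x * x * y).trace * (ω ^ 2 - 3 * ω + 3)) * hω2

private lemma okubo_right (F : Type*) [Field F] (h3 : (3:F) ≠ 0)
    (ω : F) (hω3 : ω ^ 3 = 1) (hω2 : ω ^ 2 + ω + 1 = 0)
    (x y : Matrix (Fin 3) (Fin 3) F) (hx : x.trace = 0) :
    okuboMul F ω x (okuboMul F ω y x)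
      = -(x*x*y + x*y*x + y*(x*x)) + (x*y).trace • x
        + (x*x*y).trace • (1 : Matrix (Fin 3) (Fin 3) F) := by
  have t1 : (x*y*x).trace = (x*x*y).trace := by
    rw [trace_mul_comm, ← mul_assoc]
  have t2 : (y*x*x).trace = (x*x*y).trace := by
    rw [mul_assoc, trace_mul_comm]
  simp only [okuboMul, sub_mul, mul_sub, smul_mul_assoc, mul_smul_comm,
    Matrix.one_mul, Matrix.mul_one, trace_sub, trace_smul, Matrix.trace_one,
    smul_smul, Matrix.mul_assoc, t1, t2, smul_eq_mul]
  rw [show (x*(y*x)).trace = (x*x*y).trace from by rw [← Matrix.mul_assoc]; exact t1,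
      show (x*(x*y)).trace = (x*x*y).trace from by rw [Matrix.mul_assoc],
      show (y*x).trace = (x*y).trace from trace_mul_comm y x, hx]
  match_scalars <;> field_simp <;>
    first
      | linear_combination (ω ^ 2 - ω + 1) * hω2
      | linear_combination hω3
      | linear_combination (-3 * (x * y).trace * (ω ^ 2 - 3 * ω + 3)) * hω2
      | linear_combination (-(x * x * y).trace * (ω ^ 2 - 3 * ω + 3)) * hω2
      | linear_combination (-1 : F) * hω3
      | linear_combination (-(x * y).trace * (ω ^ 2 - 3 * ω + 3)) * hω2
      | linear_combination (-3 * (x * x * y).trace * (ω ^ 2 - 3 * ω + 3)) * hω2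

end OkuboAux

/-- Let `F` be a field of characteristic not `3` containing a primitive cube root
of unity `ω`.  On trace-zero `3×3` matrices with the Okubo product one has
`(x*y)*x = x*(y*x) = sr(x)·y`, where `sr(x)` is the coefficient of `X` in the
characteristic polynomial of `x`. -/
theorem okubo_flexible
    (F : Type*) [Field F] (hchar : ringChar F ≠ 3)
    (ω : F) (hω3 : ω ^ 3 = 1) (hω1 : ω ≠ 1)
    (x y : Matrix (Fin 3) (Fin 3) F) (hx : x.trace = 0) (hy : y.trace = 0) :
    okuboMul F ω (okuboMul F ω x y) x = x.charpoly.coeff 1 • y ∧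
    okuboMul F ω x (okuboMul F ω y x) = x.charpoly.coeff 1 • y := by
  have h3 : (3:F) ≠ 0 := by
    intro h
    have hd := (CharP.cast_eq_zero_iff F (ringChar F) 3).mp (by exact_mod_cast h)
    rcases (Nat.prime_three).eq_one_or_self_of_dvd _ hd with h1 | h1
    · exact CharP.ringChar_ne_one h1
    · exact hchar h1
  have hω2 : ω ^ 2 + ω + 1 = 0 := by
    have h : (ω - 1) * (ω ^ 2 + ω + 1) = 0 := by linear_combination hω3
    rcases mul_eq_zero.mp h with h | h
    · exact absurd (by linear_combination h) hω1
    · exact h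
  have hk := okubo_key F x y hx hy
  rw [← okubo_coeff1] at hk
  exact ⟨(okubo_left F h3 ω hω3 hω2 x y hx).trans hk,
         (okubo_right F h3 ω hω3 hω2 x y hx).trans hk⟩
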